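/- For all real numbers z with 0 ≤ z ≤ 1, we have (1-z)^(1-z) · (1+z)^(1+z) · e^(-z²) ≥ 1, with the convention 0^0 = 1. -/

import Mathlib

open Real Set

private lemma derivA (x : ℝ) (hx1 : -1 < x) (hx2 : x < 1) :
    HasDerivAt (fun y => Real.log (1+y) - Real.log (1-y) - 2*y)
      (1/(1+x) + 1/(1-x) - 2) x := by
  have h1 : HasDerivAt (fun y : ℝ => 1 + y) 1 x := by
    simpa using (hasDerivAt_id x).const_add 1
  have h2 : HasDerivAt (fun y : ℝ => 1 - y) (-1) x := by
    simpa using (hasDerivAt_id x).const_sub 1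
  have l1 := h1.log (by linarith)
  have l2 := h2.log (by linarith)
  have lm : HasDerivAt (fun y : ℝ => 2*y) 2 x := by
    simpa using (hasDerivAt_id x).const_mul 2
  have := (l1.sub l2).sub lm
  refine this.congr_deriv ?_
  field_simp
  ring

private lemma lem1 (z : ℝ) (h0 : 0 ≤ z) (h1 : z < 1) :
    2*z ≤ Real.log (1+z) - Real.log (1-z) := by
  set f : ℝ → ℝ := fun y => Real.log (1+y) - Real.log (1-y) - 2*y with hf
  have key : MonotoneOn f (Icc 0 z) := by
    apply monotoneOn_of_deriv_nonneg (convex_Icc 0 z)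
    · intro x hx
      exact (derivA x (by linarith [hx.1]) (by linarith [hx.2])).continuousAt.continuousWithinAt
    · intro x hx
      rw [interior_Icc] at hx
      exact (derivA x (by linarith [hx.1]) (by linarith [hx.2])).differentiableAt.differentiableWithinAt
    · intro x hx
      rw [interior_Icc] at hx
      rw [(derivA x (by linarith [hx.1]) (by linarith [hx.2])).deriv]
      have hx0 : 0 < x := hx.1
      have hx1' : x < 1 := lt_trans hx.2 h1
      have p1 : (0:ℝ) < 1 + x := by linarith
      have p2 : (0:ℝ) < 1 - x := by linarith
      rw [sub_nonneg, div_add_div _ _ (ne_of_gt p1) (ne_of_gt p2), le_div_iff₀ (by positivity)]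
      nlinarith
  have h := key (left_mem_Icc.2 h0) (right_mem_Icc.2 h0) h0
  simp only [hf] at h
  norm_num at h
  linarith

private lemma derivB (x : ℝ) (hx1 : -1 < x) (hx2 : x < 1) :
    HasDerivAt (fun y => (1+y) * Real.log (1+y) + (1-y) * Real.log (1-y) - y^2)
      (Real.log (1+x) - Real.log (1-x) - 2*x) x := by
  have h1 : HasDerivAt (fun y : ℝ => 1 + y) 1 x := by
    simpa using (hasDerivAt_id x).const_add 1
  have h2 : HasDerivAt (fun y : ℝ => 1 - y) (-1) x := by
    simpa using (hasDerivAt_id x).const_sub 1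
  have l1 := h1.log (by linarith)
  have l2 := h2.log (by linarith)
  have lp : HasDerivAt (fun y : ℝ => y^2) (2*x) x := by
    simpa using (hasDerivAt_pow 2 x)
  have := ((h1.mul l1).add (h2.mul l2)).sub lp
  refine this.congr_deriv ?_
  have p1 : (1:ℝ) + x ≠ 0 := by linarith
  have p2 : (1:ℝ) - x ≠ 0 := by linarith
  field_simp
  ring

private lemma lem2 (z : ℝ) (h0 : 0 ≤ z) (h1 : z < 1) :
    z^2 ≤ (1+z) * Real.log (1+z) + (1-z) * Real.log (1-z) := by
  set g : ℝ → ℝ := fun y => (1+y) * Real.log (1+y) + (1-y) * Real.log (1-y) - y^2 with hg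
  have key : MonotoneOn g (Icc 0 z) := by
    apply monotoneOn_of_deriv_nonneg (convex_Icc 0 z)
    · intro x hx
      exact (derivB x (by linarith [hx.1]) (by linarith [hx.2])).continuousAt.continuousWithinAt
    · intro x hx
      rw [interior_Icc] at hx
      exact (derivB x (by linarith [hx.1]) (by linarith [hx.2])).differentiableAt.differentiableWithinAt
    · intro x hx
      rw [interior_Icc] at hx
      rw [(derivB x (by linarith [hx.1]) (by linarith [hx.2])).deriv]
      have := lem1 x (le_of_lt hx.1) (lt_trans hx.2 h1)
      linarith
  have h := key (left_mem_Icc.2 h0) (right_mem_Icc.2 h0) h0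
  simp only [hg] at h
  norm_num at h
  linarith

/-- For all real `z` with `0 ≤ z ≤ 1`,
`(1-z)^(1-z) * (1+z)^(1+z) * exp(-z^2) ≥ 1` (real powers, with `0^0 = 1`). -/
theorem stmt0 (z : ℝ) (h0 : 0 ≤ z) (h1 : z ≤ 1) :
    1 ≤ (1 - z) ^ (1 - z) * (1 + z) ^ (1 + z) * Real.exp (-z ^ 2) := by
  rcases eq_or_lt_of_le h1 with rfl | hlt
  · norm_num
    have he : Real.exp (-1 : ℝ) * Real.exp 1 = 1 := by
      rw [← Real.exp_add]; norm_num
    nlinarith [Real.exp_one_lt_d9, Real.exp_pos (-1 : ℝ), Real.exp_pos (1:ℝ)]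
  · have p1 : (0:ℝ) < 1 - z := by linarith
    have p2 : (0:ℝ) < 1 + z := by linarith
    rw [Real.rpow_def_of_pos p1, Real.rpow_def_of_pos p2, ← Real.exp_add, ← Real.exp_add]
    apply Real.one_le_exp
    nlinarith [lem2 z h0 hlt]
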